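/- Let 𝓜 = (M,<,…) be a definably complete expansion of a dense linear order without endpoints and dim : Def(𝓜) → ℕ ∪ {−∞} a dimension function. Then dim X = 0 for every nonempty definable subset X of M that is closed and discrete in the order topology. -/

import Mathlib

open FirstOrder FirstOrder.Language Set

universe u v w

namespace PaperDim

section Core

variable (L : FirstOrder.Language.{v, w}) (M : Type u) [L.Structure M]

/-- The collection of definable subsets of `M^n` (definable with parameters from `M`). -/
abbrev DefSet (n : ℕ) : Type u :=
  {X : Set (Fin n → M) // Set.Definable (Set.univ : Set M) L X}

variable {L M}

/-- A definable subset of `M^1` viewed as a subset of `M`. -/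
def asSet1 (X : Set (Fin 1 → M)) : Set M := {a : M | (fun _ => a) ∈ X}

/-- The fiber of `X ⊆ M^{n+1}` over `x ∈ M^n`, as a subset of `M^1`. -/
def fiber {n : ℕ} (X : Set (Fin (n + 1) → M)) (x : Fin n → M) : Set (Fin 1 → M) :=
  {y | Fin.snoc x (y 0) ∈ X}

/-- Condition (1) of a dimension function: `dim ∅ = -∞`, `dim {a} = 0`, `dim M = 1`.
Here `d k` is the value of the dimension function on definable subsets of `M^{k+1}`. -/
def Cond1 (d : ∀ n : ℕ, DefSet L M (n + 1) → WithBot ℕ) : Prop :=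
  (∀ X : DefSet L M 1, X.1 = ∅ → d 0 X = ⊥) ∧
  (∀ (X : DefSet L M 1) (a : M), X.1 = ({fun _ => a} : Set (Fin 1 → M)) → d 0 X = 0) ∧
  (∀ X : DefSet L M 1, X.1 = (Set.univ : Set (Fin 1 → M)) → d 0 X = 1)

/-- Condition (2)ₙ (at arity `n + 1`): `dim (X ∪ Y) = max (dim X) (dim Y)`. -/
def Cond2 (d : ∀ n : ℕ, DefSet L M (n + 1) → WithBot ℕ) (n : ℕ) : Prop :=
  ∀ X Y Z : DefSet L M (n + 1), Z.1 = X.1 ∪ Y.1 → d n Z = max (d n X) (d n Y)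

/-- Condition (3)ₙ (at arity `n + 1`): invariance under coordinate permutations. -/
def Cond3 (d : ∀ n : ℕ, DefSet L M (n + 1) → WithBot ℕ) (n : ℕ) : Prop :=
  ∀ (σ : Equiv.Perm (Fin (n + 1))) (X Y : DefSet L M (n + 1)),
    Y.1 = {y : Fin (n + 1) → M | y ∘ σ ∈ X.1} → d n Y = d n X

/-- Condition (3'): invariance under switching the two coordinates, at arity 2. -/
def Cond3' (d : ∀ n : ℕ, DefSet L M (n + 1) → WithBot ℕ) : Prop :=
  ∀ X Y : DefSet L M 2, Y.1 = {v : Fin 2 → M | ![v 1, v 0] ∈ X.1} → d 1 Y = d 1 X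

/-- Condition (4)ₙ, the addition property (at arity `n + 2`):
the set `X(i)` of points over which the fiber of `X` has dimension `i` is definable, and
`dim (X ∩ Π⁻¹(X(i))) = dim X(i) + i`. -/
def Cond4 (d : ∀ n : ℕ, DefSet L M (n + 1) → WithBot ℕ) (n : ℕ) : Prop :=
  ∀ (X : DefSet L M (n + 2)) (i : Fin 2),
    ∃ (Xi : DefSet L M (n + 1)) (W : DefSet L M (n + 2)),
      Xi.1 = {x : Fin (n + 1) → M |
        ∃ hf : Set.Definable (Set.univ : Set M) L (fiber X.1 x),
          d 0 ⟨fiber X.1 x, hf⟩ = ((i : ℕ) : WithBot ℕ)} ∧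
      W.1 = X.1 ∩ (fun z : Fin (n + 2) → M => z ∘ Fin.castSucc) ⁻¹' Xi.1 ∧
      d (n + 1) W = d n Xi + ((i : ℕ) : WithBot ℕ)

/-- A dimension function on the structure `M` (van den Dries). -/
def IsDimFun (d : ∀ n : ℕ, DefSet L M (n + 1) → WithBot ℕ) : Prop :=
  Cond1 d ∧ (∀ n, Cond2 d n) ∧ (∀ n, Cond3 d n) ∧ (∀ n, Cond4 d n)

/-- A weak dimension function: conditions (1), (2)₁, (3') and (4)ₙ for all `n > 1`. -/
def IsWeakDimFun (d : ∀ n : ℕ, DefSet L M (n + 1) → WithBot ℕ) : Prop :=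
  Cond1 d ∧ Cond2 d 0 ∧ Cond3' d ∧ (∀ n, Cond4 d n)

variable (L M)

/-- The set `DIM(M)` of dimension functions on `M`. -/
def DimFuns : Set (∀ n : ℕ, DefSet L M (n + 1) → WithBot ℕ) := {d | IsDimFun d}

/-- `𝔫_dim(M)`: the cardinality of the set of dimension functions on `M`. -/
noncomputable def nDim : Cardinal := Cardinal.mk (DimFuns L M)

/-- The order `<` is definable in the structure. -/
def LtDefinable [LT M] : Prop :=
  Set.Definable (Set.univ : Set M) L {v : Fin 2 → M | v 0 < v 1}

/-- The graph of addition is definable in the structure. -/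
def AddDefinable [Add M] : Prop :=
  Set.Definable (Set.univ : Set M) L {v : Fin 3 → M | v 0 + v 1 = v 2}

/-- The graph of multiplication is definable in the structure. -/
def MulDefinable [Mul M] : Prop :=
  Set.Definable (Set.univ : Set M) L {v : Fin 3 → M | v 0 * v 1 = v 2}

end Core

/-- The order topology on a linear order, generated by open rays. -/
def orderTop (α : Type*) [LinearOrder α] : TopologicalSpace α :=
  TopologicalSpace.generateFrom {s : Set α | (∃ a, s = Set.Ioi a) ∨ (∃ a, s = Set.Iio a)}

/-- A set is discrete (w.r.t. a topology `t`) if all of its points are isolated in it. -/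
def DiscreteIn {α : Type*} (t : TopologicalSpace α) (D : Set α) : Prop :=
  ∀ x ∈ D, ∃ U : Set α, t.IsOpen U ∧ U ∩ D = {x}

/-- An open interval: a nonempty set of the form `(a, b)` with `a, b ∈ M ∪ {±∞}`. -/
def IsOpenInterval {α : Type*} [Preorder α] (S : Set α) : Prop :=
  S.Nonempty ∧ ((∃ a b, S = Set.Ioo a b) ∨ (∃ a, S = Set.Ioi a) ∨
    (∃ b, S = Set.Iio b) ∨ S = Set.univ)

section Ord

variable (L : FirstOrder.Language.{v, w}) (M : Type u) [L.Structure M]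

/-- O-minimality: every definable subset of `M` is a union of a finite set and finitely many
open intervals. -/
def OMinimal [LinearOrder M] : Prop :=
  ∀ X : DefSet L M 1, ∃ (F : Set M) (k : ℕ) (C : Fin k → Set M),
    F.Finite ∧ (∀ i, IsOpenInterval (C i)) ∧ asSet1 X.1 = F ∪ ⋃ i, C i

/-- Weak o-minimality: every definable subset of `M` is a union of finitely many convex sets. -/
def WeaklyOMinimal [LinearOrder M] : Prop :=
  ∀ X : DefSet L M 1, ∃ (k : ℕ) (C : Fin k → Set M),
    (∀ i, (C i).OrdConnected) ∧ asSet1 X.1 = ⋃ i, C i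

/-- Definable completeness: every definable subset of `M` has a supremum and an infimum in
`M ∪ {±∞}`. -/
def DefinablyComplete [LinearOrder M] : Prop :=
  ∀ X : DefSet L M 1,
    ((asSet1 X.1).Nonempty → BddAbove (asSet1 X.1) → ∃ a, IsLUB (asSet1 X.1) a) ∧
    ((asSet1 X.1).Nonempty → BddBelow (asSet1 X.1) → ∃ a, IsGLB (asSet1 X.1) a)

/-- d-minimality: the structure is definably complete and in every elementarily equivalent
structure, every definable subset of the universe is a union of an open set and finitely many
discrete sets. The linear order is assumed to be the interpretation of the relation symbol `lt`. -/
def DMinimal [LinearOrder M] (lt : L.Relations 2) : Prop :=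
  DefinablyComplete L M ∧
  ∀ (N : Type u) [L.Structure N] [LinearOrder N],
    (∀ a b : N, Structure.RelMap lt ![a, b] ↔ a < b) →
    L.ElementarilyEquivalent M N →
    ∀ X : DefSet L N 1,
      ∃ (U : Set N) (k : ℕ) (D : Fin k → Set N),
        (orderTop N).IsOpen U ∧ (∀ i, DiscreteIn (orderTop N) (D i)) ∧
        asSet1 X.1 = U ∪ ⋃ i, D i

end Ord

open scoped Classical in
/-- The topological dimension of a definable set: the largest `d` such that the image of the
set under some coordinate projection `M^n → M^d` has nonempty interior (w.r.t. the order
topology and the corresponding product topologies). -/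
noncomputable def dimTop {M : Type u} [LinearOrder M] {n : ℕ} (X : Set (Fin n → M)) :
    WithBot ℕ :=
  if X = ∅ then ⊥
  else
    ↑(sSup {d : ℕ | ∃ f : Fin d → Fin n, Function.Injective f ∧
      (@interior (Fin d → M) (@Pi.topologicalSpace (Fin d) (fun _ => M) (fun _ => orderTop M))
        ((fun x : Fin n → M => x ∘ f) '' X)).Nonempty})


/-! ### Extra notions -/

/-- `G ⊆ M²` is the graph of a bijection from `A` onto `B`. -/
def IsDefBijectionGraph {M : Type u} (G : Set (Fin 2 → M)) (A B : Set M) : Prop :=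
  (∀ v ∈ G, v 0 ∈ A ∧ v 1 ∈ B) ∧
  (∀ x ∈ A, ∃! y : M, (![x, y] : Fin 2 → M) ∈ G) ∧
  (∀ y ∈ B, ∃! x : M, (![x, y] : Fin 2 → M) ∈ G)

section Extra

variable (L : FirstOrder.Language.{v, w}) (M : Type u) [L.Structure M]

/-- A definable set `I ⊆ M` is self-sufficient if it is infinite and there is no definable
bijection between an infinite definable subset of `I` and an infinite definable subset of
`M ∖ I`. -/
def SelfSufficient (I : Set M) : Prop :=
  I.Infinite ∧
  ∀ J₁ J₂ : DefSet L M 1, asSet1 J₁.1 ⊆ I → asSet1 J₂.1 ⊆ Iᶜ →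
    (asSet1 J₁.1).Infinite → (asSet1 J₂.1).Infinite →
    ¬ ∃ G : DefSet L M 2, IsDefBijectionGraph G.1 (asSet1 J₁.1) (asSet1 J₂.1)

/-- A self-sufficient set is minimally self-sufficient if every self-sufficient set either
meets it in a finite set or contains it up to a finite set. -/
def MinimallySelfSufficient (I : Set M) : Prop :=
  SelfSufficient L M I ∧
  ∀ X : DefSet L M 1, SelfSufficient L M (asSet1 X.1) →
    (I ∩ asSet1 X.1).Finite ∨ ∃ F : Set M, F.Finite ∧ I ⊆ asSet1 X.1 ∪ F

end Extra

/-- `I₁ ∼_fin I₂`: the symmetric difference is finite. -/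
def FinSymmDiff {M : Type u} (A B : Set M) : Prop := ((A \ B) ∪ (B \ A)).Finite

/-- `I⟨τ⟩`: the product of copies of `I` (where `τ i = false`) and `M ∖ I`
(where `τ i = true`). -/
def Itau {M : Type u} (I : Set M) {n : ℕ} (τ : Fin n → Bool) : Set (Fin n → M) :=
  {v | ∀ i, if τ i then v i ∉ I else v i ∈ I}

open scoped Classical in
/-- The value of `Dim[I]` on a (nonempty) definable set contained in `I⟨τ⟩`. -/
noncomputable def DimIPiece {M : Type u} [LinearOrder M] (I : Set M) :
    (n : ℕ) → (Fin (n + 1) → Bool) → Set (Fin (n + 1) → M) → WithBot ℕ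
  | 0, τ, X =>
    if X = ∅ then ⊥ else if τ 0 then 0 else dimTop X
  | n + 1, τ, X =>
    if X = ∅ then ⊥
    else if τ (Fin.last (n + 1)) then
      DimIPiece I n (fun i => τ i.castSucc)
        ((fun v : Fin (n + 2) → M => v ∘ Fin.castSucc) '' X)
    else
      max (dimTop {x : Fin (n + 1) → M |
              (∃ v ∈ X, v ∘ Fin.castSucc = x) ∧ dimTop (fiber X x) ≠ 1})
        (dimTop {x : Fin (n + 1) → M | dimTop (fiber X x) = 1} + 1)

/-- The function `Dim[I]` associated with a subset `I` of `M` (the input dimension being the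
topological dimension). -/
noncomputable def DimI {M : Type u} [LinearOrder M] (I : Set M) (n : ℕ)
    (X : Set (Fin (n + 1) → M)) : WithBot ℕ :=
  Finset.univ.sup fun τ : Fin (n + 1) → Bool => DimIPiece I n τ (X ∩ Itau I τ)

section Morley

variable (L : FirstOrder.Language.{v, w}) (M : Type u) [L.Structure M]

/-- The model-theoretic algebraic closure of a set of parameters `A`. -/
def aclS (A : Set M) : Set M :=
  {a : M | ∃ s : Set (Fin 1 → M), Set.Definable A L s ∧ s.Finite ∧ (fun _ => a) ∈ s}

open scoped Classical in
/-- The rank `rk^acl(X/A)`: the largest cardinality of a subset of the coordinates of a point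
of `X` that is `acl`-independent over `A` (and `-∞` for `X = ∅`). -/
noncomputable def rkOver {n : ℕ} (A : Set M) (X : Set (Fin n → M)) : WithBot ℕ :=
  if X = ∅ then ⊥
  else
    ↑(sSup {k : ℕ | ∃ x ∈ X, ∃ S : Finset (Fin n), S.card = k ∧
        ∀ i ∈ S, x i ∉ aclS L M (A ∪ x '' {j : Fin n | j ∈ S ∧ j ≠ i})})

/-- A structure is minimal if every definable subset of the universe is finite or cofinite. -/
def MinimalStr : Prop :=
  ∀ X : DefSet L M 1, (asSet1 X.1).Finite ∨ ((asSet1 X.1)ᶜ : Set M).Finite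

/-- A structure is strongly minimal if every elementarily equivalent structure is minimal. -/
def StronglyMinimal : Prop :=
  MinimalStr L M ∧
  ∀ (N : Type u) [L.Structure N], L.ElementarilyEquivalent M N → MinimalStr L N

end Morley

section Theories

/-- A divisible Abelian group structure on a subset `S`, with addition `f`. -/
def DivAbGroupOn {α : Type*} (f : α → α → α) (S : Set α) : Prop :=
  (∀ x ∈ S, ∀ y ∈ S, f x y ∈ S) ∧
  (∀ x ∈ S, ∀ y ∈ S, f x y = f y x) ∧
  (∀ x ∈ S, ∀ y ∈ S, ∀ z ∈ S, f (f x y) z = f x (f y z)) ∧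
  (∃ e ∈ S, (∀ x ∈ S, f e x = x) ∧ (∀ x ∈ S, ∃ y ∈ S, f x y = e)) ∧
  (∀ k : ℕ, 0 < k → ∀ x ∈ S, ∃ y ∈ S, (f y)^[k - 1] y = x)

/-- Embedding of `M` into `M ∪ {±∞}`. -/
def emb {α : Type*} (x : α) : WithBot (WithTop α) := ((x : WithTop α) : WithBot (WithTop α))

/-- `M` is a model of the theory `T_m` of Proposition 3.17: a DLO with constants
`c_1 < ⋯ < c_{m-1}` (recorded here by the boundary sequence
`⊥ = c 0 < c 1 < ⋯ < c m = ⊤` in `M ∪ {±∞}`), such that `+` restricts to a divisible Abelian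
group on each interval `(c_{i-1}, c_i)` and is constantly `c_1` off the union of the
`(c_{i-1}, c_i)²`. -/
def ModelTm (m : ℕ) (hm : 0 < m) (L : FirstOrder.Language.{v, w}) (M : Type u)
    [L.Structure M] [LinearOrder M]
    (lt : L.Relations 2) (plus : L.Functions 2)
    (c : Fin (m + 1) → WithBot (WithTop M)) : Prop :=
  DenselyOrdered M ∧ NoMinOrder M ∧ NoMaxOrder M ∧ Nonempty M ∧
  (∀ x y : M, Structure.RelMap lt ![x, y] ↔ x < y) ∧
  c 0 = ⊥ ∧ c (Fin.last m) = ⊤ ∧ StrictMono c ∧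
  (∀ i : Fin (m + 1), i ≠ 0 → i ≠ Fin.last m → ∃ x : M, c i = emb x) ∧
  (∀ i : Fin m,
    DivAbGroupOn (fun x y : M => Structure.funMap plus ![x, y])
      {x : M | c i.castSucc < emb x ∧ emb x < c i.succ}) ∧
  (∀ x y : M,
    (¬ ∃ i : Fin m, (c i.castSucc < emb x ∧ emb x < c i.succ) ∧
        (c i.castSucc < emb y ∧ emb y < c i.succ)) →
    ∀ z : M, c ⟨1, by omega⟩ = emb z → Structure.funMap plus ![x, y] = z)

/-- The set of realizations of a unary predicate. -/
def relSet (L : FirstOrder.Language.{v, w}) (M : Type u) [L.Structure M]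
    (r : L.Relations 1) : Set M :=
  {x : M | Structure.RelMap r ![x]}

/-- `M` is a model of the theory `T_m` of Theorem 3.18: an ordered divisible Abelian group
with a strictly increasing chain of nontrivial proper convex subgroups `U_1 ⊊ ⋯ ⊊ U_m ⊊ M`. -/
def ModelTw (m : ℕ) (L : FirstOrder.Language.{v, w}) (M : Type u)
    [L.Structure M] [AddCommGroup M] [LinearOrder M] [IsOrderedAddMonoid M]
    (lt : L.Relations 2) (plus : L.Functions 2) (U : Fin m → L.Relations 1) : Prop :=
  (∀ x y : M, Structure.RelMap lt ![x, y] ↔ x < y) ∧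
  (∀ x y : M, Structure.funMap plus ![x, y] = x + y) ∧
  (∀ k : ℕ, 0 < k → ∀ x : M, ∃ y : M, k • y = x) ∧
  (∀ i : Fin m,
    (0 : M) ∈ relSet L M (U i) ∧
    (∀ x ∈ relSet L M (U i), ∀ y ∈ relSet L M (U i), x + y ∈ relSet L M (U i)) ∧
    (∀ x ∈ relSet L M (U i), -x ∈ relSet L M (U i)) ∧
    (relSet L M (U i)).OrdConnected ∧
    relSet L M (U i) ≠ {0} ∧ relSet L M (U i) ≠ Set.univ) ∧
  (∀ i j : Fin m, i < j → relSet L M (U i) ⊂ relSet L M (U j))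

end Theories



/-! ### Auxiliary lemmas for Statement 12 -/

section Aux12

open Set

variable {L : FirstOrder.Language.{v, w}} {M : Type u} [L.Structure M]

private lemma fin1_eta (v : Fin 1 → M) : v = fun _ => v 0 :=
  funext fun i => by rw [Subsingleton.elim i 0]

private lemma snoc_eq (x : Fin 1 → M) (c : M) :
    (Fin.snoc x c : Fin 2 → M) = ![x 0, c] := by
  funext i
  fin_cases i
  · show (Fin.snoc x c : Fin 2 → M) 0 = x 0
    simp [Fin.snoc]
  · show (Fin.snoc x c : Fin 2 → M) 1 = c
    simp [Fin.snoc]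

private lemma comp_swap_eq (v : Fin 2 → M) :
    v ∘ (Equiv.swap (0 : Fin 2) 1) = ![v 1, v 0] := by
  funext i; fin_cases i <;> simp

private lemma def_fix_fst {s2 : Set (Fin 2 → M)}
    (h : Set.Definable (Set.univ : Set M) L s2) (a : M) :
    Set.Definable (Set.univ : Set M) L {y : Fin 1 → M | (![a, y 0] : Fin 2 → M) ∈ s2} := by
  obtain ⟨φ, hφ⟩ := h
  set tf : Fin 2 → L[[↑(Set.univ : Set M)]].Term (Fin 1) :=
    ![Constants.term (L.con ⟨a, mem_univ a⟩), Term.var 0] with htf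
  refine ⟨φ.subst tf, ?_⟩
  ext y
  simp only [hφ, mem_setOf_eq, Formula.Realize, BoundedFormula.realize_subst]
  have key : (fun i => Term.realize y (tf i)) = ![a, y 0] := by
    funext i; fin_cases i <;> simp [htf]
  rw [key]

private lemma def_fix_snd {s2 : Set (Fin 2 → M)}
    (h : Set.Definable (Set.univ : Set M) L s2) (a : M) :
    Set.Definable (Set.univ : Set M) L {y : Fin 1 → M | (![y 0, a] : Fin 2 → M) ∈ s2} := by
  obtain ⟨φ, hφ⟩ := h
  set tf : Fin 2 → L[[↑(Set.univ : Set M)]].Term (Fin 1) :=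
    ![Term.var 0, Constants.term (L.con ⟨a, mem_univ a⟩)] with htf
  refine ⟨φ.subst tf, ?_⟩
  ext y
  simp only [hφ, mem_setOf_eq, Formula.Realize, BoundedFormula.realize_subst]
  have key : (fun i => Term.realize y (tf i)) = ![y 0, a] := by
    funext i; fin_cases i <;> simp [htf]
  rw [key]

section LO

variable [LinearOrder M]

private lemma def_lt1 (hlt : LtDefinable L M) (a : M) :
    Set.Definable (Set.univ : Set M) L {v : Fin 1 → M | v 0 < a} := by
  have h := def_fix_snd hlt a
  convert h using 1
  ext v; simp

private lemma def_gt1 (hlt : LtDefinable L M) (a : M) :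
    Set.Definable (Set.univ : Set M) L {v : Fin 1 → M | a < v 0} := by
  have h := def_fix_fst hlt a
  convert h using 1
  ext v; simp

private lemma def_ge1 (hlt : LtDefinable L M) (a : M) :
    Set.Definable (Set.univ : Set M) L {v : Fin 1 → M | a ≤ v 0} := by
  have h := (def_lt1 hlt a).compl
  convert h using 1
  ext v; simp [not_lt]

private lemma def_le1 (hlt : LtDefinable L M) (a : M) :
    Set.Definable (Set.univ : Set M) L {v : Fin 1 → M | v 0 ≤ a} := by
  have h := (def_gt1 hlt a).compl
  convert h using 1
  ext v; simp [not_lt]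

private lemma def_sing1 (hlt : LtDefinable L M) (a : M) :
    Set.Definable (Set.univ : Set M) L ({fun _ => a} : Set (Fin 1 → M)) := by
  have h := (def_ge1 hlt a).inter (def_le1 hlt a)
  convert h using 1
  ext v
  constructor
  · rintro rfl; exact ⟨le_refl a, le_refl a⟩
  · rintro ⟨h1, h2⟩
    have : v 0 = a := le_antisymm h2 h1
    rw [mem_singleton_iff, fin1_eta v, this]

/-- `Z ∩ (-∞, a)` as a definable set. -/
def cutB (Z : DefSet L M 1) (hlt : LtDefinable L M) (a : M) : DefSet L M 1 :=
  ⟨Z.1 ∩ {v | v 0 < a}, Z.2.inter (def_lt1 hlt a)⟩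

/-- `Z ∩ (a, ∞)` as a definable set. -/
def cutA (Z : DefSet L M 1) (hlt : LtDefinable L M) (a : M) : DefSet L M 1 :=
  ⟨Z.1 ∩ {v | a < v 0}, Z.2.inter (def_gt1 hlt a)⟩

/-- `Z ∩ [a, b)` as a definable set. -/
def cutCI (Z : DefSet L M 1) (hlt : LtDefinable L M) (a b : M) : DefSet L M 1 :=
  ⟨Z.1 ∩ {v | a ≤ v 0} ∩ {v | v 0 < b}, (Z.2.inter (def_ge1 hlt a)).inter (def_lt1 hlt b)⟩

/-- `Z ∩ (a, b]` as a definable set. -/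
def cutIC (Z : DefSet L M 1) (hlt : LtDefinable L M) (a b : M) : DefSet L M 1 :=
  ⟨Z.1 ∩ {v | a < v 0} ∩ {v | v 0 ≤ b}, (Z.2.inter (def_gt1 hlt a)).inter (def_le1 hlt b)⟩

/-- `Z ∩ [a, ∞)` as a definable set. -/
def cutGE (Z : DefSet L M 1) (hlt : LtDefinable L M) (a : M) : DefSet L M 1 :=
  ⟨Z.1 ∩ {v | a ≤ v 0}, Z.2.inter (def_ge1 hlt a)⟩

/-- `Z ∩ (-∞, a]` as a definable set. -/
def cutLE (Z : DefSet L M 1) (hlt : LtDefinable L M) (a : M) : DefSet L M 1 :=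
  ⟨Z.1 ∩ {v | v 0 ≤ a}, Z.2.inter (def_le1 hlt a)⟩

/-- a singleton as a definable set. -/
def sing1 (hlt : LtDefinable L M) (a : M) : DefSet L M 1 :=
  ⟨{fun _ => a}, def_sing1 hlt a⟩

end LO

end Aux12

section Aux12b

open Set

private lemma wb_bot_ne_one : (⊥ : WithBot ℕ) ≠ 1 := by decide

private lemma wb_one_nle_zero : ¬ (1 : WithBot ℕ) ≤ 0 := by decide

private lemma wb_cases {a : WithBot ℕ} (h0 : 0 ≤ a) (h1 : a ≤ 1) : a = 0 ∨ a = 1 := by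
  induction a using WithBot.recBotCoe with
  | bot => exact absurd h0 (by decide)
  | coe n =>
    have hn : n ≤ 1 := by rwa [← WithBot.coe_one, WithBot.coe_le_coe] at h1
    interval_cases n
    · exact Or.inl (by simp)
    · exact Or.inr (by simp)

private lemma wb_le_zero {a : WithBot ℕ} (h1 : a ≤ 1) (h2 : a ≠ 1) : a ≤ 0 := by
  induction a using WithBot.recBotCoe with
  | bot => exact bot_le
  | coe n =>
    have hn : n ≤ 1 := by rwa [← WithBot.coe_one, WithBot.coe_le_coe] at h1
    interval_cases n
    · simp
    · exact absurd (by simp) h2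

private lemma wb_succ {a : WithBot ℕ} (h : a + 1 = 1 + 1) : a = 1 := by
  induction a using WithBot.recBotCoe with
  | bot => exact absurd h (by decide)
  | coe n =>
    rw [← WithBot.coe_one, ← WithBot.coe_add, ← WithBot.coe_add, WithBot.coe_inj] at h
    rw [← WithBot.coe_one, WithBot.coe_inj]
    omega

private lemma wb_ne_two {a : WithBot ℕ} (h1 : a ≤ 1) : a ≠ 1 + 1 := by
  intro h
  rw [h] at h1
  exact absurd h1 (by decide)

variable {L : FirstOrder.Language.{v, w}} {M : Type u} [L.Structure M]
variable {d : ∀ n : ℕ, DefSet L M (n + 1) → WithBot ℕ}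

private lemma dim_congr1 {X Y : DefSet L M 1} (h : X.1 = Y.1) : d 0 X = d 0 Y :=
  congrArg (d 0) (Subtype.ext h)

private lemma dim_congr2 {X Y : DefSet L M 2} (h : X.1 = Y.1) : d 1 X = d 1 Y :=
  congrArg (d 1) (Subtype.ext h)

private lemma dim_mono (hd : IsDimFun d) {X Y : DefSet L M 1} (h : X.1 ⊆ Y.1) :
    d 0 X ≤ d 0 Y := by
  have hu := hd.2.1 0 X Y Y (by rw [Set.union_eq_self_of_subset_left h])
  rw [hu]; exact le_max_left _ _

private lemma dim_le_one (hd : IsDimFun d) (X : DefSet L M 1) : d 0 X ≤ 1 := by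
  have h1 : d 0 (⟨Set.univ, Set.definable_univ⟩ : DefSet L M 1) = 1 := hd.1.2.2 _ rfl
  rw [← h1]; exact dim_mono hd (subset_univ _)

private lemma dim_empty (hd : IsDimFun d) {X : DefSet L M 1} (h : X.1 = ∅) : d 0 X = ⊥ :=
  hd.1.1 X h

private lemma dim_nonempty (hd : IsDimFun d) {X : DefSet L M 1} (h : d 0 X ≠ ⊥) :
    X.1.Nonempty := by
  rcases X.1.eq_empty_or_nonempty with he | hne
  · exact absurd (dim_empty hd he) h
  · exact hne

section LO2

variable [LinearOrder M]

private lemma dim_nonneg (hd : IsDimFun d) (hlt : LtDefinable L M) {X : DefSet L M 1}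
    (h : X.1.Nonempty) : 0 ≤ d 0 X := by
  obtain ⟨v, hv⟩ := h
  have hs : d 0 (sing1 (M := M) hlt (v 0)) = 0 := hd.1.2.1 _ (v 0) rfl
  rw [← hs]
  refine dim_mono hd ?_
  intro w hw
  have hw' : w = fun _ => v 0 := hw
  rw [hw', ← fin1_eta v]; exact hv

private lemma dim_subsing (hd : IsDimFun d) (hlt : LtDefinable L M) {X : DefSet L M 1}
    {a : M} (h : X.1 ⊆ {fun _ => a}) : d 0 X ≤ 0 := by
  rcases X.1.eq_empty_or_nonempty with he | hne
  · rw [dim_empty hd he]; exact bot_le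
  · have hx : X.1 = {fun _ => a} := by
      apply subset_antisymm h
      obtain ⟨v, hv⟩ := hne
      have := h hv
      rw [mem_singleton_iff] at this
      rw [singleton_subset_iff, ← this]; exact hv
    rw [hd.1.2.1 X a hx]

end LO2

/-- definability of fibers of definable 2-dimensional sets -/
private lemma fiber_def {C : Set (Fin 2 → M)} (hC : Set.Definable (Set.univ : Set M) L C)
    (x : Fin 1 → M) : Set.Definable (Set.univ : Set M) L (fiber C x) := by
  have h := def_fix_fst hC (x 0)
  convert h using 1
  ext y
  show (Fin.snoc x (y 0) : Fin 2 → M) ∈ C ↔ _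
  rw [snoc_eq]
  rfl

/-- The master counting lemma: dimension of a definable subset of `M²` via its fibers. -/
private lemma master (hd : IsDimFun d) [LinearOrder M] (hlt : LtDefinable L M)
    (C : DefSet L M 2) :
    ∃ B0 B1 : DefSet L M 1,
      (∀ x : Fin 1 → M, x ∈ B0.1 ↔ d 0 ⟨fiber C.1 x, fiber_def C.2 x⟩ = 0) ∧
      (∀ x : Fin 1 → M, x ∈ B1.1 ↔ d 0 ⟨fiber C.1 x, fiber_def C.2 x⟩ = 1) ∧
      d 1 C = max (d 0 B0) (d 0 B1 + 1) := by
  obtain ⟨B0, W0, hB0, hW0, hd0⟩ := hd.2.2.2 0 C 0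
  obtain ⟨B1, W1, hB1, hW1, hd1⟩ := hd.2.2.2 0 C 1
  have m0 : ∀ x : Fin 1 → M, x ∈ B0.1 ↔ d 0 ⟨fiber C.1 x, fiber_def C.2 x⟩ = 0 := by
    intro x
    rw [hB0]
    simp only [mem_setOf_eq]
    constructor
    · rintro ⟨hf, h⟩
      rw [show (⟨fiber C.1 x, fiber_def C.2 x⟩ : DefSet L M 1) = ⟨fiber C.1 x, hf⟩ from
        Subtype.ext rfl, h]
      simp
    · intro h
      exact ⟨fiber_def C.2 x, by rw [h]; simp⟩
  have m1 : ∀ x : Fin 1 → M, x ∈ B1.1 ↔ d 0 ⟨fiber C.1 x, fiber_def C.2 x⟩ = 1 := by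
    intro x
    rw [hB1]
    simp only [mem_setOf_eq]
    constructor
    · rintro ⟨hf, h⟩
      rw [show (⟨fiber C.1 x, fiber_def C.2 x⟩ : DefSet L M 1) = ⟨fiber C.1 x, hf⟩ from
        Subtype.ext rfl, h]
      simp
    · intro h
      exact ⟨fiber_def C.2 x, by rw [h]; simp⟩
  refine ⟨B0, B1, m0, m1, ?_⟩
  have hcup : C.1 = W0.1 ∪ W1.1 := by
    apply subset_antisymm
    · intro v hv
      have hfib : (fun _ => v 1) ∈ fiber C.1 (v ∘ Fin.castSucc) := by
        show (Fin.snoc (v ∘ Fin.castSucc) ((fun _ : Fin 1 => v 1) 0) : Fin 2 → M) ∈ C.1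
        have : (Fin.snoc (v ∘ Fin.castSucc) ((fun _ : Fin 1 => v 1) 0) : Fin 2 → M) = v := by
          funext i
          fin_cases i
          · show (Fin.snoc (v ∘ Fin.castSucc) (v 1) : Fin 2 → M) 0 = v 0
            rw [snoc_eq]; rfl
          · show (Fin.snoc (v ∘ Fin.castSucc) (v 1) : Fin 2 → M) 1 = v 1
            rw [snoc_eq]; rfl
        rwa [this]
      have hne : (fiber C.1 (v ∘ Fin.castSucc)).Nonempty := ⟨_, hfib⟩
      have h0 : 0 ≤ d 0 (⟨fiber C.1 (v ∘ Fin.castSucc),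
          fiber_def C.2 (v ∘ Fin.castSucc)⟩ : DefSet L M 1) := dim_nonneg hd hlt hne
      have h1 : d 0 (⟨fiber C.1 (v ∘ Fin.castSucc),
          fiber_def C.2 (v ∘ Fin.castSucc)⟩ : DefSet L M 1) ≤ 1 := dim_le_one hd _
      rcases wb_cases h0 h1 with h | h
      · left
        rw [hW0]
        exact ⟨hv, by rw [mem_preimage, m0]; exact h⟩
      · right
        rw [hW1]
        exact ⟨hv, by rw [mem_preimage, m1]; exact h⟩
    · rw [hW0, hW1]
      exact union_subset (inter_subset_left) (inter_subset_left)
  have hC2 := hd.2.1 1 W0 W1 C hcup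
  rw [hC2, hd0, hd1]
  norm_num

/-- invariance of dimension under the coordinate swap in `M²`. -/
private lemma dim_swap (hd : IsDimFun d) (C : DefSet L M 2) :
    d 1 ⟨{v : Fin 2 → M | v ∘ (Equiv.swap (0 : Fin 2) 1) ∈ C.1},
      C.2.preimage_comp (Equiv.swap (0 : Fin 2) 1)⟩ = d 1 C :=
  hd.2.2.1 1 (Equiv.swap (0 : Fin 2) 1) C _ rfl

end Aux12b

section Aux12c

open Set

variable {L : FirstOrder.Language.{v, w}} {M : Type u} [L.Structure M]
variable {d : ∀ n : ℕ, DefSet L M (n + 1) → WithBot ℕ}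

private lemma def2_pre0 (Z : DefSet L M 1) :
    Set.Definable (Set.univ : Set M) L {v : Fin 2 → M | (fun _ => v 0) ∈ Z.1} :=
  Z.2.preimage_comp (fun _ : Fin 1 => (0 : Fin 2))

private lemma def2_pre1 (Z : DefSet L M 1) :
    Set.Definable (Set.univ : Set M) L {v : Fin 2 → M | (fun _ => v 1) ∈ Z.1} :=
  Z.2.preimage_comp (fun _ : Fin 1 => (1 : Fin 2))

section LO3

variable [LinearOrder M]

private lemma def2_gtswap (hlt : LtDefinable L M) :
    Set.Definable (Set.univ : Set M) L {v : Fin 2 → M | v 1 < v 0} := by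
  have h := Set.Definable.preimage_comp (![1, 0] : Fin 2 → Fin 2) hlt
  convert h using 1
  ext v; simp

/-- the set `{(a,b) : b ∈ Z, b < a}` -/
def Clam (Z : DefSet L M 1) (hlt : LtDefinable L M) : DefSet L M 2 :=
  ⟨{v | (fun _ => v 1) ∈ Z.1} ∩ {v | v 1 < v 0}, (def2_pre1 Z).inter (def2_gtswap hlt)⟩

/-- the set `{(a,b) : b ∈ Z, a < b}` -/
def Cmu (Z : DefSet L M 1) (hlt : LtDefinable L M) : DefSet L M 2 :=
  ⟨{v | (fun _ => v 1) ∈ Z.1} ∩ {v | v 0 < v 1}, (def2_pre1 Z).inter hlt⟩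

private lemma fiber_Clam (Z : DefSet L M 1) (hlt : LtDefinable L M) (x : Fin 1 → M) :
    fiber (Clam Z hlt).1 x = (cutB Z hlt (x 0)).1 := by
  ext y
  show (Fin.snoc x (y 0) : Fin 2 → M) ∈ (Clam Z hlt).1 ↔ y ∈ (cutB Z hlt (x 0)).1
  rw [snoc_eq]
  show ((fun _ : Fin 1 => (![x 0, y 0] : Fin 2 → M) 1) ∈ Z.1 ∧
      (![x 0, y 0] : Fin 2 → M) 1 < (![x 0, y 0] : Fin 2 → M) 0) ↔ (y ∈ Z.1 ∧ y 0 < x 0)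
  simp only [Matrix.cons_val_one, Matrix.head_cons, Matrix.cons_val_zero]
  rw [← fin1_eta y]

private lemma fiber_Cmu (Z : DefSet L M 1) (hlt : LtDefinable L M) (x : Fin 1 → M) :
    fiber (Cmu Z hlt).1 x = (cutA Z hlt (x 0)).1 := by
  ext y
  show (Fin.snoc x (y 0) : Fin 2 → M) ∈ (Cmu Z hlt).1 ↔ y ∈ (cutA Z hlt (x 0)).1
  rw [snoc_eq]
  show ((fun _ : Fin 1 => (![x 0, y 0] : Fin 2 → M) 1) ∈ Z.1 ∧
      (![x 0, y 0] : Fin 2 → M) 0 < (![x 0, y 0] : Fin 2 → M) 1) ↔ (y ∈ Z.1 ∧ x 0 < y 0)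
  simp only [Matrix.cons_val_one, Matrix.head_cons, Matrix.cons_val_zero]
  rw [← fin1_eta y]

/-- the set `{y : dim (Z ∩ (-∞,y)) = 1}` is definable -/
private lemma S1_exists (hd : IsDimFun d) (hlt : LtDefinable L M) (Z : DefSet L M 1) :
    ∃ S1 : DefSet L M 1, ∀ a : M, a ∈ asSet1 S1.1 ↔ d 0 (cutB Z hlt a) = 1 := by
  obtain ⟨B0, B1, _, m1, _⟩ := master hd hlt (Clam Z hlt)
  refine ⟨B1, fun a => ?_⟩
  have hcg : d 0 (⟨fiber (Clam Z hlt).1 (fun _ : Fin 1 => a),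
      fiber_def (Clam Z hlt).2 (fun _ : Fin 1 => a)⟩ : DefSet L M 1) = d 0 (cutB Z hlt a) :=
    dim_congr1 (fiber_Clam Z hlt (fun _ => a))
  have h := m1 (fun _ : Fin 1 => a)
  rw [hcg] at h
  exact h

/-- the set `{y : dim (Z ∩ (y,∞)) = 1}` is definable -/
private lemma T1_exists (hd : IsDimFun d) (hlt : LtDefinable L M) (Z : DefSet L M 1) :
    ∃ T1 : DefSet L M 1, ∀ a : M, a ∈ asSet1 T1.1 ↔ d 0 (cutA Z hlt a) = 1 := by
  obtain ⟨B0, B1, _, m1, _⟩ := master hd hlt (Cmu Z hlt)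
  refine ⟨B1, fun a => ?_⟩
  have hcg : d 0 (⟨fiber (Cmu Z hlt).1 (fun _ : Fin 1 => a),
      fiber_def (Cmu Z hlt).2 (fun _ : Fin 1 => a)⟩ : DefSet L M 1) = d 0 (cutA Z hlt a) :=
    dim_congr1 (fiber_Cmu Z hlt (fun _ => a))
  have h := m1 (fun _ : Fin 1 => a)
  rw [hcg] at h
  exact h

end LO3

end Aux12c

section Aux12d

open Set

variable {L : FirstOrder.Language.{v, w}} {M : Type u} [L.Structure M]
variable {d : ∀ n : ℕ, DefSet L M (n + 1) → WithBot ℕ}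
variable [LinearOrder M]

/-- the set `{(a,b) : a ∈ Z, b ∈ Z, b < a}` -/
def CD (Z : DefSet L M 1) (hlt : LtDefinable L M) : DefSet L M 2 :=
  ⟨{v | (fun _ => v 0) ∈ Z.1} ∩ ({v | (fun _ => v 1) ∈ Z.1} ∩ {v | v 1 < v 0}),
    (def2_pre0 Z).inter ((def2_pre1 Z).inter (def2_gtswap hlt))⟩

/-- the coordinate swap of `CD` -/
def CDsw (Z : DefSet L M 1) (hlt : LtDefinable L M) : DefSet L M 2 :=
  ⟨{v | v ∘ (Equiv.swap (0 : Fin 2) 1) ∈ (CD Z hlt).1},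
    (CD Z hlt).2.preimage_comp (Equiv.swap (0 : Fin 2) 1)⟩

/-- the set `{(a,b) : a ∈ Z, b ∈ Z, a < b}` -/
def CE (Z : DefSet L M 1) (hlt : LtDefinable L M) : DefSet L M 2 :=
  ⟨{v | (fun _ => v 0) ∈ Z.1} ∩ ({v | (fun _ => v 1) ∈ Z.1} ∩ {v | v 0 < v 1}),
    (def2_pre0 Z).inter ((def2_pre1 Z).inter hlt)⟩

/-- the coordinate swap of `CE` -/
def CEsw (Z : DefSet L M 1) (hlt : LtDefinable L M) : DefSet L M 2 :=
  ⟨{v | v ∘ (Equiv.swap (0 : Fin 2) 1) ∈ (CE Z hlt).1},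
    (CE Z hlt).2.preimage_comp (Equiv.swap (0 : Fin 2) 1)⟩

private lemma fiber_CD_mem (Z : DefSet L M 1) (hlt : LtDefinable L M) (x : Fin 1 → M)
    (hx : (fun _ : Fin 1 => x 0) ∈ Z.1) :
    fiber (CD Z hlt).1 x = (cutB Z hlt (x 0)).1 := by
  ext y
  show (Fin.snoc x (y 0) : Fin 2 → M) ∈ (CD Z hlt).1 ↔ y ∈ (cutB Z hlt (x 0)).1
  rw [snoc_eq]
  show ((fun _ : Fin 1 => (![x 0, y 0] : Fin 2 → M) 0) ∈ Z.1 ∧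
      ((fun _ : Fin 1 => (![x 0, y 0] : Fin 2 → M) 1) ∈ Z.1 ∧
        (![x 0, y 0] : Fin 2 → M) 1 < (![x 0, y 0] : Fin 2 → M) 0)) ↔ (y ∈ Z.1 ∧ y 0 < x 0)
  simp only [Matrix.cons_val_one, Matrix.head_cons, Matrix.cons_val_zero]
  rw [← fin1_eta y]
  exact ⟨fun h => h.2, fun h => ⟨hx, h⟩⟩

private lemma fiber_CD_not (Z : DefSet L M 1) (hlt : LtDefinable L M) (x : Fin 1 → M)
    (hx : (fun _ : Fin 1 => x 0) ∉ Z.1) :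
    fiber (CD Z hlt).1 x = ∅ := by
  ext y
  show (Fin.snoc x (y 0) : Fin 2 → M) ∈ (CD Z hlt).1 ↔ y ∈ (∅ : Set (Fin 1 → M))
  rw [snoc_eq]
  show ((fun _ : Fin 1 => (![x 0, y 0] : Fin 2 → M) 0) ∈ Z.1 ∧
      ((fun _ : Fin 1 => (![x 0, y 0] : Fin 2 → M) 1) ∈ Z.1 ∧
        (![x 0, y 0] : Fin 2 → M) 1 < (![x 0, y 0] : Fin 2 → M) 0)) ↔ y ∈ (∅ : Set (Fin 1 → M))
  simp only [Matrix.cons_val_one, Matrix.head_cons, Matrix.cons_val_zero]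
  exact ⟨fun h => absurd h.1 hx, fun h => absurd h (notMem_empty y)⟩

private lemma fiber_CDsw_mem (Z : DefSet L M 1) (hlt : LtDefinable L M) (x : Fin 1 → M)
    (hx : (fun _ : Fin 1 => x 0) ∈ Z.1) :
    fiber (CDsw Z hlt).1 x = (cutA Z hlt (x 0)).1 := by
  ext y
  show (Fin.snoc x (y 0) : Fin 2 → M) ∘ (Equiv.swap (0 : Fin 2) 1) ∈ (CD Z hlt).1 ↔
    y ∈ (cutA Z hlt (x 0)).1
  rw [snoc_eq, comp_swap_eq]
  simp only [Matrix.cons_val_one, Matrix.head_cons, Matrix.cons_val_zero]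
  show ((fun _ : Fin 1 => (![y 0, x 0] : Fin 2 → M) 0) ∈ Z.1 ∧
      ((fun _ : Fin 1 => (![y 0, x 0] : Fin 2 → M) 1) ∈ Z.1 ∧
        (![y 0, x 0] : Fin 2 → M) 1 < (![y 0, x 0] : Fin 2 → M) 0)) ↔ (y ∈ Z.1 ∧ x 0 < y 0)
  simp only [Matrix.cons_val_one, Matrix.head_cons, Matrix.cons_val_zero]
  rw [← fin1_eta y]
  exact ⟨fun h => ⟨h.1, h.2.2⟩, fun h => ⟨h.1, hx, h.2⟩⟩

private lemma fiber_CDsw_not (Z : DefSet L M 1) (hlt : LtDefinable L M) (x : Fin 1 → M)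
    (hx : (fun _ : Fin 1 => x 0) ∉ Z.1) :
    fiber (CDsw Z hlt).1 x = ∅ := by
  ext y
  show (Fin.snoc x (y 0) : Fin 2 → M) ∘ (Equiv.swap (0 : Fin 2) 1) ∈ (CD Z hlt).1 ↔
    y ∈ (∅ : Set (Fin 1 → M))
  rw [snoc_eq, comp_swap_eq]
  show ((fun _ : Fin 1 => (![(![x 0, y 0] : Fin 2 → M) 1, (![x 0, y 0] : Fin 2 → M) 0] : Fin 2 → M) 0) ∈ Z.1 ∧
      ((fun _ : Fin 1 => (![(![x 0, y 0] : Fin 2 → M) 1, (![x 0, y 0] : Fin 2 → M) 0] : Fin 2 → M) 1) ∈ Z.1 ∧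
        (![(![x 0, y 0] : Fin 2 → M) 1, (![x 0, y 0] : Fin 2 → M) 0] : Fin 2 → M) 1 <
          (![(![x 0, y 0] : Fin 2 → M) 1, (![x 0, y 0] : Fin 2 → M) 0] : Fin 2 → M) 0)) ↔
    y ∈ (∅ : Set (Fin 1 → M))
  simp only [Matrix.cons_val_one, Matrix.head_cons, Matrix.cons_val_zero]
  exact ⟨fun h => absurd h.2.1 hx, fun h => absurd h (notMem_empty y)⟩

private lemma fiber_CE_mem (Z : DefSet L M 1) (hlt : LtDefinable L M) (x : Fin 1 → M)
    (hx : (fun _ : Fin 1 => x 0) ∈ Z.1) :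
    fiber (CE Z hlt).1 x = (cutA Z hlt (x 0)).1 := by
  ext y
  show (Fin.snoc x (y 0) : Fin 2 → M) ∈ (CE Z hlt).1 ↔ y ∈ (cutA Z hlt (x 0)).1
  rw [snoc_eq]
  show ((fun _ : Fin 1 => (![x 0, y 0] : Fin 2 → M) 0) ∈ Z.1 ∧
      ((fun _ : Fin 1 => (![x 0, y 0] : Fin 2 → M) 1) ∈ Z.1 ∧
        (![x 0, y 0] : Fin 2 → M) 0 < (![x 0, y 0] : Fin 2 → M) 1)) ↔ (y ∈ Z.1 ∧ x 0 < y 0)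
  simp only [Matrix.cons_val_one, Matrix.head_cons, Matrix.cons_val_zero]
  rw [← fin1_eta y]
  exact ⟨fun h => h.2, fun h => ⟨hx, h⟩⟩

private lemma fiber_CE_not (Z : DefSet L M 1) (hlt : LtDefinable L M) (x : Fin 1 → M)
    (hx : (fun _ : Fin 1 => x 0) ∉ Z.1) :
    fiber (CE Z hlt).1 x = ∅ := by
  ext y
  show (Fin.snoc x (y 0) : Fin 2 → M) ∈ (CE Z hlt).1 ↔ y ∈ (∅ : Set (Fin 1 → M))
  rw [snoc_eq]
  show ((fun _ : Fin 1 => (![x 0, y 0] : Fin 2 → M) 0) ∈ Z.1 ∧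
      ((fun _ : Fin 1 => (![x 0, y 0] : Fin 2 → M) 1) ∈ Z.1 ∧
        (![x 0, y 0] : Fin 2 → M) 0 < (![x 0, y 0] : Fin 2 → M) 1)) ↔ y ∈ (∅ : Set (Fin 1 → M))
  simp only [Matrix.cons_val_one, Matrix.head_cons, Matrix.cons_val_zero]
  exact ⟨fun h => absurd h.1 hx, fun h => absurd h (notMem_empty y)⟩

private lemma fiber_CEsw_mem (Z : DefSet L M 1) (hlt : LtDefinable L M) (x : Fin 1 → M)
    (hx : (fun _ : Fin 1 => x 0) ∈ Z.1) :
    fiber (CEsw Z hlt).1 x = (cutB Z hlt (x 0)).1 := by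
  ext y
  show (Fin.snoc x (y 0) : Fin 2 → M) ∘ (Equiv.swap (0 : Fin 2) 1) ∈ (CE Z hlt).1 ↔
    y ∈ (cutB Z hlt (x 0)).1
  rw [snoc_eq, comp_swap_eq]
  show ((fun _ : Fin 1 => (![(![x 0, y 0] : Fin 2 → M) 1, (![x 0, y 0] : Fin 2 → M) 0] : Fin 2 → M) 0) ∈ Z.1 ∧
      ((fun _ : Fin 1 => (![(![x 0, y 0] : Fin 2 → M) 1, (![x 0, y 0] : Fin 2 → M) 0] : Fin 2 → M) 1) ∈ Z.1 ∧
        (![(![x 0, y 0] : Fin 2 → M) 1, (![x 0, y 0] : Fin 2 → M) 0] : Fin 2 → M) 0 <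
          (![(![x 0, y 0] : Fin 2 → M) 1, (![x 0, y 0] : Fin 2 → M) 0] : Fin 2 → M) 1)) ↔
    y ∈ (cutB Z hlt (x 0)).1
  simp only [Matrix.cons_val_one, Matrix.head_cons, Matrix.cons_val_zero]
  show ((fun _ : Fin 1 => y 0) ∈ Z.1 ∧ ((fun _ : Fin 1 => x 0) ∈ Z.1 ∧ y 0 < x 0)) ↔
    (y ∈ Z.1 ∧ y 0 < x 0)
  rw [← fin1_eta y]
  exact ⟨fun h => ⟨h.1, h.2.2⟩, fun h => ⟨h.1, hx, h.2⟩⟩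

private lemma fiber_CEsw_not (Z : DefSet L M 1) (hlt : LtDefinable L M) (x : Fin 1 → M)
    (hx : (fun _ : Fin 1 => x 0) ∉ Z.1) :
    fiber (CEsw Z hlt).1 x = ∅ := by
  ext y
  show (Fin.snoc x (y 0) : Fin 2 → M) ∘ (Equiv.swap (0 : Fin 2) 1) ∈ (CE Z hlt).1 ↔
    y ∈ (∅ : Set (Fin 1 → M))
  rw [snoc_eq, comp_swap_eq]
  show ((fun _ : Fin 1 => (![(![x 0, y 0] : Fin 2 → M) 1, (![x 0, y 0] : Fin 2 → M) 0] : Fin 2 → M) 0) ∈ Z.1 ∧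
      ((fun _ : Fin 1 => (![(![x 0, y 0] : Fin 2 → M) 1, (![x 0, y 0] : Fin 2 → M) 0] : Fin 2 → M) 1) ∈ Z.1 ∧
        (![(![x 0, y 0] : Fin 2 → M) 1, (![x 0, y 0] : Fin 2 → M) 0] : Fin 2 → M) 0 <
          (![(![x 0, y 0] : Fin 2 → M) 1, (![x 0, y 0] : Fin 2 → M) 0] : Fin 2 → M) 1)) ↔
    y ∈ (∅ : Set (Fin 1 → M))
  simp only [Matrix.cons_val_one, Matrix.head_cons, Matrix.cons_val_zero]
  exact ⟨fun h => absurd h.2.1 hx, fun h => absurd h (notMem_empty y)⟩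

end Aux12d

section Aux12e

open Set

variable {L : FirstOrder.Language.{v, w}} {M : Type u} [L.Structure M]
variable {d : ∀ n : ℕ, DefSet L M (n + 1) → WithBot ℕ}
variable [LinearOrder M]

private lemma lemmaD (hd : IsDimFun d) (hlt : LtDefinable L M) (Z : DefSet L M 1)
    (hZ1 : d 0 Z = 1) (hall : ∀ y : M, d 0 (cutB Z hlt y) = 1) :
    ∃ x : M, d 0 (cutA Z hlt x) = 1 := by
  obtain ⟨B0, B1, m0, m1, hm⟩ := master hd hlt (CD Z hlt)
  have hB1 : B1.1 = Z.1 := by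
    ext x
    rw [m1]
    constructor
    · intro h
      by_contra hx
      have hx' : (fun _ : Fin 1 => x 0) ∉ Z.1 := by rwa [← fin1_eta x]
      have hfe := fiber_CD_not Z hlt x hx'
      have hbot : d 0 (⟨fiber (CD Z hlt).1 x, fiber_def (CD Z hlt).2 x⟩ : DefSet L M 1) = ⊥ :=
        dim_empty hd hfe
      rw [hbot] at h
      exact wb_bot_ne_one h
    · intro hx
      have hx' : (fun _ : Fin 1 => x 0) ∈ Z.1 := by rwa [← fin1_eta x]
      have hcg : d 0 (⟨fiber (CD Z hlt).1 x, fiber_def (CD Z hlt).2 x⟩ : DefSet L M 1) =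
          d 0 (cutB Z hlt (x 0)) := dim_congr1 (fiber_CD_mem Z hlt x hx')
      rw [hcg]
      exact hall (x 0)
  have hdB1 : d 0 B1 = 1 := by
    have := dim_congr1 (d := d) hB1
    rw [this]; exact hZ1
  have hB0le : d 0 B0 ≤ 1 := dim_le_one hd B0
  have hmax : d 1 (CD Z hlt) = (1 + 1 : WithBot ℕ) := by
    rw [hm, hdB1]
    exact max_eq_right (le_trans hB0le (by decide))
  obtain ⟨A0, A1, n0, n1, hn⟩ := master hd hlt (CDsw Z hlt)
  have hsw : d 1 (CDsw Z hlt) = d 1 (CD Z hlt) :=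
    hd.2.2.1 1 (Equiv.swap (0 : Fin 2) 1) (CD Z hlt) (CDsw Z hlt) rfl
  have h2 : max (d 0 A0) (d 0 A1 + 1) = (1 + 1 : WithBot ℕ) := by
    rw [← hn, hsw, hmax]
  have hA0le : d 0 A0 ≤ 1 := dim_le_one hd A0
  rcases max_choice (d 0 A0) (d 0 A1 + 1) with hc | hc <;> rw [hc] at h2
  · exact absurd h2 (wb_ne_two hA0le)
  · have hA1 : d 0 A1 = 1 := wb_succ h2
    have hA1ne : A1.1.Nonempty := dim_nonempty hd (by rw [hA1]; decide)
    obtain ⟨x, hx⟩ := hA1ne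
    rw [n1] at hx
    by_cases hxZ : (fun _ : Fin 1 => x 0) ∈ Z.1
    · refine ⟨x 0, ?_⟩
      have hcg : d 0 (⟨fiber (CDsw Z hlt).1 x, fiber_def (CDsw Z hlt).2 x⟩ : DefSet L M 1) =
          d 0 (cutA Z hlt (x 0)) := dim_congr1 (fiber_CDsw_mem Z hlt x hxZ)
      rw [hcg] at hx
      exact hx
    · exfalso
      have hfe := fiber_CDsw_not Z hlt x hxZ
      have hbot : d 0 (⟨fiber (CDsw Z hlt).1 x, fiber_def (CDsw Z hlt).2 x⟩ : DefSet L M 1) = ⊥ :=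
        dim_empty hd hfe
      rw [hbot] at hx
      exact wb_bot_ne_one hx

private lemma lemmaD' (hd : IsDimFun d) (hlt : LtDefinable L M) (Z : DefSet L M 1)
    (hZ1 : d 0 Z = 1) (hall : ∀ y : M, d 0 (cutA Z hlt y) = 1) :
    ∃ x : M, d 0 (cutB Z hlt x) = 1 := by
  obtain ⟨B0, B1, m0, m1, hm⟩ := master hd hlt (CE Z hlt)
  have hB1 : B1.1 = Z.1 := by
    ext x
    rw [m1]
    constructor
    · intro h
      by_contra hx
      have hx' : (fun _ : Fin 1 => x 0) ∉ Z.1 := by rwa [← fin1_eta x]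
      have hfe := fiber_CE_not Z hlt x hx'
      have hbot : d 0 (⟨fiber (CE Z hlt).1 x, fiber_def (CE Z hlt).2 x⟩ : DefSet L M 1) = ⊥ :=
        dim_empty hd hfe
      rw [hbot] at h
      exact wb_bot_ne_one h
    · intro hx
      have hx' : (fun _ : Fin 1 => x 0) ∈ Z.1 := by rwa [← fin1_eta x]
      have hcg : d 0 (⟨fiber (CE Z hlt).1 x, fiber_def (CE Z hlt).2 x⟩ : DefSet L M 1) =
          d 0 (cutA Z hlt (x 0)) := dim_congr1 (fiber_CE_mem Z hlt x hx')
      rw [hcg]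
      exact hall (x 0)
  have hdB1 : d 0 B1 = 1 := by
    have := dim_congr1 (d := d) hB1
    rw [this]; exact hZ1
  have hB0le : d 0 B0 ≤ 1 := dim_le_one hd B0
  have hmax : d 1 (CE Z hlt) = (1 + 1 : WithBot ℕ) := by
    rw [hm, hdB1]
    exact max_eq_right (le_trans hB0le (by decide))
  obtain ⟨A0, A1, n0, n1, hn⟩ := master hd hlt (CEsw Z hlt)
  have hsw : d 1 (CEsw Z hlt) = d 1 (CE Z hlt) :=
    hd.2.2.1 1 (Equiv.swap (0 : Fin 2) 1) (CE Z hlt) (CEsw Z hlt) rfl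
  have h2 : max (d 0 A0) (d 0 A1 + 1) = (1 + 1 : WithBot ℕ) := by
    rw [← hn, hsw, hmax]
  have hA0le : d 0 A0 ≤ 1 := dim_le_one hd A0
  rcases max_choice (d 0 A0) (d 0 A1 + 1) with hc | hc <;> rw [hc] at h2
  · exact absurd h2 (wb_ne_two hA0le)
  · have hA1 : d 0 A1 = 1 := wb_succ h2
    have hA1ne : A1.1.Nonempty := dim_nonempty hd (by rw [hA1]; decide)
    obtain ⟨x, hx⟩ := hA1ne
    rw [n1] at hx
    by_cases hxZ : (fun _ : Fin 1 => x 0) ∈ Z.1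
    · refine ⟨x 0, ?_⟩
      have hcg : d 0 (⟨fiber (CEsw Z hlt).1 x, fiber_def (CEsw Z hlt).2 x⟩ : DefSet L M 1) =
          d 0 (cutB Z hlt (x 0)) := dim_congr1 (fiber_CEsw_mem Z hlt x hxZ)
      rw [hcg] at hx
      exact hx
    · exfalso
      have hfe := fiber_CEsw_not Z hlt x hxZ
      have hbot : d 0 (⟨fiber (CEsw Z hlt).1 x, fiber_def (CEsw Z hlt).2 x⟩ : DefSet L M 1) = ⊥ :=
        dim_empty hd hfe
      rw [hbot] at hx
      exact wb_bot_ne_one hx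

end Aux12e

section Aux12f

open Set

variable {M : Type u} [LinearOrder M]

private lemma open_right [NoMaxOrder M] {U : Set M} (hU : (orderTop M).IsOpen U) :
    ∀ x ∈ U, ∃ b, x < b ∧ Set.Ico x b ⊆ U := by
  have h : TopologicalSpace.GenerateOpen
      {s : Set M | (∃ a, s = Set.Ioi a) ∨ (∃ a, s = Set.Iio a)} U := hU
  clear hU
  induction h with
  | basic s hs =>
    rcases hs with ⟨a, rfl⟩ | ⟨a, rfl⟩
    · intro x hx
      obtain ⟨b, hb⟩ := exists_gt x
      exact ⟨b, hb, fun t ht => lt_of_lt_of_le hx ht.1⟩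
    · intro x hx
      exact ⟨a, hx, fun t ht => ht.2⟩
  | univ =>
    intro x _
    obtain ⟨b, hb⟩ := exists_gt x
    exact ⟨b, hb, fun t _ => mem_univ t⟩
  | inter s t _ _ ihs iht =>
    intro x hx
    obtain ⟨b1, hb1, h1⟩ := ihs x hx.1
    obtain ⟨b2, hb2, h2⟩ := iht x hx.2
    refine ⟨min b1 b2, lt_min hb1 hb2, fun u hu => ?_⟩
    exact ⟨h1 ⟨hu.1, lt_of_lt_of_le hu.2 (min_le_left _ _)⟩,
      h2 ⟨hu.1, lt_of_lt_of_le hu.2 (min_le_right _ _)⟩⟩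
  | sUnion S _ ih =>
    intro x hx
    obtain ⟨s, hs, hxs⟩ := hx
    obtain ⟨b, hb, h⟩ := ih s hs x hxs
    exact ⟨b, hb, fun t ht => ⟨s, hs, h ht⟩⟩

private lemma open_left [NoMinOrder M] {U : Set M} (hU : (orderTop M).IsOpen U) :
    ∀ x ∈ U, ∃ a, a < x ∧ Set.Ioc a x ⊆ U := by
  have h : TopologicalSpace.GenerateOpen
      {s : Set M | (∃ a, s = Set.Ioi a) ∨ (∃ a, s = Set.Iio a)} U := hU
  clear hU
  induction h with
  | basic s hs =>
    rcases hs with ⟨a, rfl⟩ | ⟨a, rfl⟩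
    · intro x hx
      exact ⟨a, hx, fun t ht => ht.1⟩
    · intro x hx
      obtain ⟨b, hb⟩ := exists_lt x
      exact ⟨b, hb, fun t ht => lt_of_le_of_lt ht.2 hx⟩
  | univ =>
    intro x _
    obtain ⟨b, hb⟩ := exists_lt x
    exact ⟨b, hb, fun t _ => mem_univ t⟩
  | inter s t _ _ ihs iht =>
    intro x hx
    obtain ⟨b1, hb1, h1⟩ := ihs x hx.1
    obtain ⟨b2, hb2, h2⟩ := iht x hx.2
    refine ⟨max b1 b2, max_lt hb1 hb2, fun u hu => ?_⟩
    exact ⟨h1 ⟨lt_of_le_of_lt (le_max_left _ _) hu.1, hu.2⟩,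
      h2 ⟨lt_of_le_of_lt (le_max_right _ _) hu.1, hu.2⟩⟩
  | sUnion S _ ih =>
    intro x hx
    obtain ⟨s, hs, hxs⟩ := hx
    obtain ⟨b, hb, h⟩ := ih s hs x hxs
    exact ⟨b, hb, fun t ht => ⟨s, hs, h ht⟩⟩

private lemma iso_right [NoMaxOrder M] {A : Set M} (hdisc : DiscreteIn (orderTop M) A) :
    ∀ x ∈ A, ∃ b, x < b ∧ ∀ t, x < t → t < b → t ∉ A := by
  intro x hx
  obtain ⟨U, hU, hUA⟩ := hdisc x hx
  have hxU : x ∈ U := by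
    have : x ∈ U ∩ A := by rw [hUA]; exact mem_singleton x
    exact this.1
  obtain ⟨b, hb, hIco⟩ := open_right hU x hxU
  refine ⟨b, hb, fun t ht1 ht2 htA => ?_⟩
  have : t ∈ U ∩ A := ⟨hIco ⟨le_of_lt ht1, ht2⟩, htA⟩
  rw [hUA, mem_singleton_iff] at this
  exact absurd (this ▸ ht1) (lt_irrefl x)

private lemma iso_left [NoMinOrder M] {A : Set M} (hdisc : DiscreteIn (orderTop M) A) :
    ∀ x ∈ A, ∃ a, a < x ∧ ∀ t, a < t → t < x → t ∉ A := by
  intro x hx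
  obtain ⟨U, hU, hUA⟩ := hdisc x hx
  have hxU : x ∈ U := by
    have : x ∈ U ∩ A := by rw [hUA]; exact mem_singleton x
    exact this.1
  obtain ⟨a, ha, hIoc⟩ := open_left hU x hxU
  refine ⟨a, ha, fun t ht1 ht2 htA => ?_⟩
  have : t ∈ U ∩ A := ⟨hIoc ⟨ht1, le_of_lt ht2⟩, htA⟩
  rw [hUA, mem_singleton_iff] at this
  exact absurd (this ▸ ht2) (lt_irrefl x)

private lemma lub_mem [NoMinOrder M] {A : Set M} (hcl : (orderTop M).IsOpen Aᶜ)
    (hdisc : DiscreteIn (orderTop M) A) {s : Set M} (hs : s ⊆ A) {a : M}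
    (ha : IsLUB s a) : a ∈ s := by
  by_contra hns
  by_cases haA : a ∈ A
  · obtain ⟨U, hU, hUA⟩ := hdisc a haA
    have haU : a ∈ U := by
      have h' : a ∈ U ∩ A := by rw [hUA]; exact mem_singleton a
      exact h'.1
    obtain ⟨p, hp, hIoc⟩ := open_left hU a haU
    have hnub : p ∉ upperBounds s := fun h => absurd (ha.2 h) (not_le.mpr hp)
    have hex : ∃ y ∈ s, p < y := by
      by_contra hcon
      push_neg at hcon
      exact hnub fun y hy => hcon y hy
    obtain ⟨y, hy, hpy⟩ := hex
    have hyU : y ∈ U := hIoc ⟨hpy, ha.1 hy⟩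
    have : y ∈ U ∩ A := ⟨hyU, hs hy⟩
    rw [hUA, mem_singleton_iff] at this
    rw [this] at hy
    exact hns hy
  · obtain ⟨p, hp, hIoc⟩ := open_left hcl a haA
    have hnub : p ∉ upperBounds s := fun h => absurd (ha.2 h) (not_le.mpr hp)
    have hex : ∃ y ∈ s, p < y := by
      by_contra hcon
      push_neg at hcon
      exact hnub fun y hy => hcon y hy
    obtain ⟨y, hy, hpy⟩ := hex
    exact absurd (hs hy) (hIoc ⟨hpy, ha.1 hy⟩)

private lemma glb_mem [NoMaxOrder M] {A : Set M} (hcl : (orderTop M).IsOpen Aᶜ)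
    (hdisc : DiscreteIn (orderTop M) A) {s : Set M} (hs : s ⊆ A) {a : M}
    (ha : IsGLB s a) : a ∈ s := by
  by_contra hns
  by_cases haA : a ∈ A
  · obtain ⟨U, hU, hUA⟩ := hdisc a haA
    have haU : a ∈ U := by
      have h' : a ∈ U ∩ A := by rw [hUA]; exact mem_singleton a
      exact h'.1
    obtain ⟨p, hp, hIco⟩ := open_right hU a haU
    have hnlb : p ∉ lowerBounds s := fun h => absurd (ha.2 h) (not_le.mpr hp)
    have hex : ∃ y ∈ s, y < p := by
      by_contra hcon
      push_neg at hcon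
      exact hnlb fun y hy => hcon y hy
    obtain ⟨y, hy, hpy⟩ := hex
    have hyU : y ∈ U := hIco ⟨ha.1 hy, hpy⟩
    have : y ∈ U ∩ A := ⟨hyU, hs hy⟩
    rw [hUA, mem_singleton_iff] at this
    rw [this] at hy
    exact hns hy
  · obtain ⟨p, hp, hIco⟩ := open_right hcl a haA
    have hnlb : p ∉ lowerBounds s := fun h => absurd (ha.2 h) (not_le.mpr hp)
    have hex : ∃ y ∈ s, y < p := by
      by_contra hcon
      push_neg at hcon
      exact hnlb fun y hy => hcon y hy
    obtain ⟨y, hy, hpy⟩ := hex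
    exact absurd (hs hy) (hIco ⟨ha.1 hy, hpy⟩)

end Aux12f

section Aux12g

open Set

variable {L : FirstOrder.Language.{v, w}} {M : Type u} [L.Structure M]
variable {d : ∀ n : ℕ, DefSet L M (n + 1) → WithBot ℕ}
variable [LinearOrder M] [NoMaxOrder M] [NoMinOrder M]

private lemma lemmaL (hd : IsDimFun d) (hlt : LtDefinable L M) (hdc : DefinablyComplete L M)
    {A : Set M} (hcl : (orderTop M).IsOpen Aᶜ) (hdisc : DiscreteIn (orderTop M) A)
    (Z : DefSet L M 1) (hZA : asSet1 Z.1 ⊆ A)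
    (hSne : ∃ y : M, d 0 (cutB Z hlt y) = 1)
    (hSbd : BddBelow {y : M | d 0 (cutB Z hlt y) = 1}) : False := by
  have hup : ∀ {y y' : M}, d 0 (cutB Z hlt y) = 1 → y ≤ y' → d 0 (cutB Z hlt y') = 1 := by
    intro y y' h hyy
    refine le_antisymm (dim_le_one hd _) ?_
    rw [← h]
    exact dim_mono hd fun v hv => ⟨hv.1, lt_of_lt_of_le hv.2 hyy⟩
  obtain ⟨S1, hS1⟩ := S1_exists hd hlt Z
  have hSeq : asSet1 S1.1 = {y : M | d 0 (cutB Z hlt y) = 1} := Set.ext hS1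
  obtain ⟨c, hc⟩ := (hdc S1).2 (by rw [hSeq]; exact hSne) (by rw [hSeq]; exact hSbd)
  rw [hSeq] at hc
  have hgt : ∀ y : M, c < y → d 0 (cutB Z hlt y) = 1 := by
    intro y hy
    have hnlb : y ∉ lowerBounds {y : M | d 0 (cutB Z hlt y) = 1} := fun h =>
      absurd (hc.2 h) (not_le.mpr hy)
    have hex : ∃ s₀ ∈ {y : M | d 0 (cutB Z hlt y) = 1}, s₀ < y := by
      by_contra hcon
      push_neg at hcon
      exact hnlb fun s₀ hs₀ => hcon s₀ hs₀
    obtain ⟨s₀, hs₀, hs₀y⟩ := hex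
    exact hup hs₀ (le_of_lt hs₀y)
  have hlt0 : ∀ y : M, y < c → d 0 (cutB Z hlt y) ≤ 0 := by
    intro y hy
    refine wb_le_zero (dim_le_one hd _) fun h => ?_
    exact absurd (hc.1 h) (not_le.mpr hy)
  have hcc : d 0 (cutB Z hlt c) ≤ 0 := by
    rcases (cutB Z hlt c).1.eq_empty_or_nonempty with he | hne
    · rw [dim_empty hd he]; exact bot_le
    · have hane : (asSet1 (cutB Z hlt c).1).Nonempty := by
        obtain ⟨v, hv⟩ := hne
        refine ⟨v 0, ?_⟩
        show (fun _ : Fin 1 => v 0) ∈ (cutB Z hlt c).1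
        rw [← fin1_eta v]
        exact hv
      have hbdd : BddAbove (asSet1 (cutB Z hlt c).1) := ⟨c, fun a haa => le_of_lt haa.2⟩
      obtain ⟨s, hs⟩ := (hdc (cutB Z hlt c)).1 hane hbdd
      have hsub : asSet1 (cutB Z hlt c).1 ⊆ A := fun a haa => hZA haa.1
      have hsmem : s ∈ asSet1 (cutB Z hlt c).1 := lub_mem hcl hdisc hsub hs
      have hsZ : (fun _ : Fin 1 => s) ∈ Z.1 := hsmem.1
      have hsc : s < c := hsmem.2
      have hsetq : (cutB Z hlt c).1 = (cutB Z hlt s).1 ∪ (sing1 hlt s).1 := by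
        ext v
        constructor
        · intro hv
          have hvm : v 0 ∈ asSet1 (cutB Z hlt c).1 := by
            show (fun _ : Fin 1 => v 0) ∈ (cutB Z hlt c).1
            rw [← fin1_eta v]
            exact hv
          have hvs : v 0 ≤ s := hs.1 hvm
          rcases lt_or_eq_of_le hvs with h | h
          · exact Or.inl ⟨hv.1, h⟩
          · exact Or.inr (show v = fun _ => s by rw [fin1_eta v, h])
        · rintro (hv | hv)
          · exact ⟨hv.1, lt_trans hv.2 hsc⟩
          · have hv' : v = fun _ => s := hv
            rw [hv']
            exact ⟨hsZ, hsc⟩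
      have hun := hd.2.1 0 (cutB Z hlt s) (sing1 hlt s) (cutB Z hlt c) hsetq
      rw [hun]
      have h2 : d 0 (sing1 (M := M) hlt s) = 0 := hd.1.2.1 _ s rfl
      exact max_le (hlt0 s hsc) (le_of_eq h2)
  have hCI : ∀ y : M, c < y → d 0 (cutCI Z hlt c y) = 1 := by
    intro y hy
    have hsetq : (cutB Z hlt y).1 = (cutB Z hlt c).1 ∪ (cutCI Z hlt c y).1 := by
      ext v
      constructor
      · intro hv
        rcases lt_or_ge (v 0) c with h | h
        · exact Or.inl ⟨hv.1, h⟩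
        · exact Or.inr ⟨⟨hv.1, h⟩, hv.2⟩
      · rintro (hv | hv)
        · exact ⟨hv.1, lt_trans hv.2 hy⟩
        · exact ⟨hv.1.1, hv.2⟩
    have hun := hd.2.1 0 (cutB Z hlt c) (cutCI Z hlt c y) (cutB Z hlt y) hsetq
    have h1 := hgt y hy
    rw [hun] at h1
    rcases max_choice (d 0 (cutB Z hlt c)) (d 0 (cutCI Z hlt c y)) with hmc | hmc <;>
      rw [hmc] at h1
    · exact absurd (h1 ▸ hcc) wb_one_nle_zero
    · exact h1
  obtain ⟨y₀, hy₀⟩ := exists_gt c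
  have hCIne : (cutCI Z hlt c y₀).1.Nonempty :=
    dim_nonempty hd (by rw [hCI y₀ hy₀]; decide)
  have hWne : (asSet1 (cutGE Z hlt c).1).Nonempty := by
    obtain ⟨v, hv⟩ := hCIne
    refine ⟨v 0, ?_⟩
    show (fun _ : Fin 1 => v 0) ∈ (cutGE Z hlt c).1
    rw [← fin1_eta v]
    exact hv.1
  have hWbd : BddBelow (asSet1 (cutGE Z hlt c).1) := ⟨c, fun a haa => haa.2⟩
  obtain ⟨x₁, hx₁⟩ := (hdc (cutGE Z hlt c)).2 hWne hWbd
  have hsubW : asSet1 (cutGE Z hlt c).1 ⊆ A := fun a haa => hZA haa.1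
  have hx₁mem : x₁ ∈ asSet1 (cutGE Z hlt c).1 := glb_mem hcl hdisc hsubW hx₁
  have hx₁A : x₁ ∈ A := hsubW hx₁mem
  obtain ⟨b, hb, hiso⟩ := iso_right hdisc x₁ hx₁A
  have hcb : c < b := lt_of_le_of_lt hx₁mem.2 hb
  have h1 := hCI b hcb
  have hsub1 : (cutCI Z hlt c b).1 ⊆ {fun _ => x₁} := by
    intro v hv
    have hvW : v 0 ∈ asSet1 (cutGE Z hlt c).1 := by
      show (fun _ : Fin 1 => v 0) ∈ (cutGE Z hlt c).1
      rw [← fin1_eta v]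
      exact hv.1
    have hx₁v : x₁ ≤ v 0 := hx₁.1 hvW
    rcases lt_or_eq_of_le hx₁v with h | h
    · have hvA : v 0 ∈ A := by
        refine hZA ?_
        show (fun _ : Fin 1 => v 0) ∈ Z.1
        rw [← fin1_eta v]
        exact hv.1.1
      exact absurd hvA (hiso (v 0) h hv.2)
    · exact show v = fun _ => x₁ by rw [fin1_eta v, ← h]
  have hle := dim_subsing hd hlt hsub1
  rw [h1] at hle
  exact wb_one_nle_zero hle

private lemma lemmaR (hd : IsDimFun d) (hlt : LtDefinable L M) (hdc : DefinablyComplete L M)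
    {A : Set M} (hcl : (orderTop M).IsOpen Aᶜ) (hdisc : DiscreteIn (orderTop M) A)
    (Z : DefSet L M 1) (hZA : asSet1 Z.1 ⊆ A)
    (hSne : ∃ y : M, d 0 (cutA Z hlt y) = 1)
    (hSbd : BddAbove {y : M | d 0 (cutA Z hlt y) = 1}) : False := by
  have hdn : ∀ {y y' : M}, d 0 (cutA Z hlt y) = 1 → y' ≤ y → d 0 (cutA Z hlt y') = 1 := by
    intro y y' h hyy
    refine le_antisymm (dim_le_one hd _) ?_
    rw [← h]
    exact dim_mono hd fun v hv => ⟨hv.1, lt_of_le_of_lt hyy hv.2⟩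
  obtain ⟨T1, hT1⟩ := T1_exists hd hlt Z
  have hSeq : asSet1 T1.1 = {y : M | d 0 (cutA Z hlt y) = 1} := Set.ext hT1
  obtain ⟨c, hc⟩ := (hdc T1).1 (by rw [hSeq]; exact hSne) (by rw [hSeq]; exact hSbd)
  rw [hSeq] at hc
  have hgt : ∀ y : M, y < c → d 0 (cutA Z hlt y) = 1 := by
    intro y hy
    have hnub : y ∉ upperBounds {y : M | d 0 (cutA Z hlt y) = 1} := fun h =>
      absurd (hc.2 h) (not_le.mpr hy)
    have hex : ∃ s₀ ∈ {y : M | d 0 (cutA Z hlt y) = 1}, y < s₀ := by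
      by_contra hcon
      push_neg at hcon
      exact hnub fun s₀ hs₀ => hcon s₀ hs₀
    obtain ⟨s₀, hs₀, hs₀y⟩ := hex
    exact hdn hs₀ (le_of_lt hs₀y)
  have hlt0 : ∀ y : M, c < y → d 0 (cutA Z hlt y) ≤ 0 := by
    intro y hy
    refine wb_le_zero (dim_le_one hd _) fun h => ?_
    exact absurd (hc.1 h) (not_le.mpr hy)
  have hcc : d 0 (cutA Z hlt c) ≤ 0 := by
    rcases (cutA Z hlt c).1.eq_empty_or_nonempty with he | hne
    · rw [dim_empty hd he]; exact bot_le
    · have hane : (asSet1 (cutA Z hlt c).1).Nonempty := by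
        obtain ⟨v, hv⟩ := hne
        refine ⟨v 0, ?_⟩
        show (fun _ : Fin 1 => v 0) ∈ (cutA Z hlt c).1
        rw [← fin1_eta v]
        exact hv
      have hbdd : BddBelow (asSet1 (cutA Z hlt c).1) := ⟨c, fun a haa => le_of_lt haa.2⟩
      obtain ⟨s, hs⟩ := (hdc (cutA Z hlt c)).2 hane hbdd
      have hsub : asSet1 (cutA Z hlt c).1 ⊆ A := fun a haa => hZA haa.1
      have hsmem : s ∈ asSet1 (cutA Z hlt c).1 := glb_mem hcl hdisc hsub hs
      have hsZ : (fun _ : Fin 1 => s) ∈ Z.1 := hsmem.1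
      have hsc : c < s := hsmem.2
      have hsetq : (cutA Z hlt c).1 = (cutA Z hlt s).1 ∪ (sing1 hlt s).1 := by
        ext v
        constructor
        · intro hv
          have hvm : v 0 ∈ asSet1 (cutA Z hlt c).1 := by
            show (fun _ : Fin 1 => v 0) ∈ (cutA Z hlt c).1
            rw [← fin1_eta v]
            exact hv
          have hvs : s ≤ v 0 := hs.1 hvm
          rcases lt_or_eq_of_le hvs with h | h
          · exact Or.inl ⟨hv.1, h⟩
          · exact Or.inr (show v = fun _ => s by rw [fin1_eta v, ← h])
        · rintro (hv | hv)
          · exact ⟨hv.1, lt_trans hsc hv.2⟩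
          · have hv' : v = fun _ => s := hv
            rw [hv']
            exact ⟨hsZ, hsc⟩
      have hun := hd.2.1 0 (cutA Z hlt s) (sing1 hlt s) (cutA Z hlt c) hsetq
      rw [hun]
      have h2 : d 0 (sing1 (M := M) hlt s) = 0 := hd.1.2.1 _ s rfl
      exact max_le (hlt0 s hsc) (le_of_eq h2)
  have hIC : ∀ y : M, y < c → d 0 (cutIC Z hlt y c) = 1 := by
    intro y hy
    have hsetq : (cutA Z hlt y).1 = (cutA Z hlt c).1 ∪ (cutIC Z hlt y c).1 := by
      ext v
      constructor
      · intro hv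
        rcases le_or_gt (v 0) c with h | h
        · exact Or.inr ⟨⟨hv.1, hv.2⟩, h⟩
        · exact Or.inl ⟨hv.1, h⟩
      · rintro (hv | hv)
        · exact ⟨hv.1, lt_trans hy hv.2⟩
        · exact ⟨hv.1.1, hv.1.2⟩
    have hun := hd.2.1 0 (cutA Z hlt c) (cutIC Z hlt y c) (cutA Z hlt y) hsetq
    have h1 := hgt y hy
    rw [hun] at h1
    rcases max_choice (d 0 (cutA Z hlt c)) (d 0 (cutIC Z hlt y c)) with hmc | hmc <;>
      rw [hmc] at h1
    · exact absurd (h1 ▸ hcc) wb_one_nle_zero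
    · exact h1
  obtain ⟨y₀, hy₀⟩ := exists_lt c
  have hICne : (cutIC Z hlt y₀ c).1.Nonempty :=
    dim_nonempty hd (by rw [hIC y₀ hy₀]; decide)
  have hWne : (asSet1 (cutLE Z hlt c).1).Nonempty := by
    obtain ⟨v, hv⟩ := hICne
    refine ⟨v 0, ?_⟩
    show (fun _ : Fin 1 => v 0) ∈ (cutLE Z hlt c).1
    rw [← fin1_eta v]
    exact ⟨hv.1.1, hv.2⟩
  have hWbd : BddAbove (asSet1 (cutLE Z hlt c).1) := ⟨c, fun a haa => haa.2⟩
  obtain ⟨x₁, hx₁⟩ := (hdc (cutLE Z hlt c)).1 hWne hWbd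
  have hsubW : asSet1 (cutLE Z hlt c).1 ⊆ A := fun a haa => hZA haa.1
  have hx₁mem : x₁ ∈ asSet1 (cutLE Z hlt c).1 := lub_mem hcl hdisc hsubW hx₁
  have hx₁A : x₁ ∈ A := hsubW hx₁mem
  obtain ⟨a, ha, hiso⟩ := iso_left hdisc x₁ hx₁A
  have hac : a < c := lt_of_lt_of_le ha hx₁mem.2
  have h1 := hIC a hac
  have hsub1 : (cutIC Z hlt a c).1 ⊆ {fun _ => x₁} := by
    intro v hv
    have hvW : v 0 ∈ asSet1 (cutLE Z hlt c).1 := by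
      show (fun _ : Fin 1 => v 0) ∈ (cutLE Z hlt c).1
      rw [← fin1_eta v]
      exact ⟨hv.1.1, hv.2⟩
    have hx₁v : v 0 ≤ x₁ := hx₁.1 hvW
    rcases lt_or_eq_of_le hx₁v with h | h
    · have hvA : v 0 ∈ A := by
        refine hZA ?_
        show (fun _ : Fin 1 => v 0) ∈ Z.1
        rw [← fin1_eta v]
        exact hv.1.1
      exact absurd hvA (hiso (v 0) hv.1.2 h)
    · exact show v = fun _ => x₁ by rw [fin1_eta v, h]
  have hle := dim_subsing hd hlt hsub1
  rw [h1] at hle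
  exact wb_one_nle_zero hle

end Aux12g

section Aux12h

open Set

variable {L : FirstOrder.Language.{v, w}} {M : Type u} [L.Structure M]
variable {d : ∀ n : ℕ, DefSet L M (n + 1) → WithBot ℕ}
variable [LinearOrder M]

private lemma cutB_up (hd : IsDimFun d) (hlt : LtDefinable L M) (Z : DefSet L M 1)
    {y y' : M} (h : d 0 (cutB Z hlt y) = 1) (hyy : y ≤ y') : d 0 (cutB Z hlt y') = 1 := by
  refine le_antisymm (dim_le_one hd _) ?_
  rw [← h]
  exact dim_mono hd fun v hv => ⟨hv.1, lt_of_lt_of_le hv.2 hyy⟩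

private lemma cutA_down (hd : IsDimFun d) (hlt : LtDefinable L M) (Z : DefSet L M 1)
    {y y' : M} (h : d 0 (cutA Z hlt y) = 1) (hyy : y' ≤ y) : d 0 (cutA Z hlt y') = 1 := by
  refine le_antisymm (dim_le_one hd _) ?_
  rw [← h]
  exact dim_mono hd fun v hv => ⟨hv.1, lt_of_le_of_lt hyy hv.2⟩

end Aux12h

/-- Let `M` be a definably complete expansion of a dense linear order
without endpoints and `dim` a dimension function on `M`. Then `dim X = 0` for every nonempty
definable subset `X` of `M` that is closed and discrete in the order topology. -/
theorem statement_12 (L : FirstOrder.Language.{v, w}) (M : Type u) [L.Structure M]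
    [LinearOrder M] [DenselyOrdered M] [NoMinOrder M] [NoMaxOrder M]
    (hlt : LtDefinable L M) (hdc : DefinablyComplete L M)
    (d : ∀ n : ℕ, DefSet L M (n + 1) → WithBot ℕ) (hd : d ∈ DimFuns L M)
    (X : DefSet L M 1) (hne : (asSet1 X.1).Nonempty)
    (hclosed : (orderTop M).IsOpen ((asSet1 X.1)ᶜ))
    (hdisc : DiscreteIn (orderTop M) (asSet1 X.1)) :
    d 0 X = 0 := by
  have hd' : IsDimFun d := hd
  have hXne : X.1.Nonempty := by
    obtain ⟨a, ha⟩ := hne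
    exact ⟨fun _ => a, ha⟩
  have h0 : 0 ≤ d 0 X := dim_nonneg hd' hlt hXne
  have h1 : d 0 X ≤ 1 := dim_le_one hd' X
  rcases wb_cases h0 h1 with h | hX1
  · exact h
  exfalso
  by_cases hS : ∃ y : M, d 0 (cutB X hlt y) = 1
  · by_cases hSb : BddBelow {y : M | d 0 (cutB X hlt y) = 1}
    · exact lemmaL hd' hlt hdc hclosed hdisc X (fun a ha => ha) hS hSb
    · have hall : ∀ y : M, d 0 (cutB X hlt y) = 1 := by
        intro y
        rw [not_bddBelow_iff] at hSb
        obtain ⟨z, hz, hzy⟩ := hSb y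
        exact cutB_up hd' hlt X hz (le_of_lt hzy)
      obtain ⟨y₀, _⟩ := hne
      set Z : DefSet L M 1 := cutB X hlt y₀ with hZdef
      have hZ1 : d 0 Z = 1 := hall y₀
      have hallZ : ∀ y : M, d 0 (cutB Z hlt y) = 1 := by
        intro y
        rcases le_total y y₀ with h | h
        · have hq : (cutB Z hlt y).1 = (cutB X hlt y).1 := by
            ext v
            constructor
            · rintro ⟨⟨h1', _⟩, h3⟩; exact ⟨h1', h3⟩
            · rintro ⟨h1', h3⟩; exact ⟨⟨h1', lt_of_lt_of_le h3 h⟩, h3⟩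
          rw [dim_congr1 (d := d) hq]; exact hall y
        · have hq : (cutB Z hlt y).1 = Z.1 := by
            ext v
            constructor
            · rintro ⟨h1', _⟩; exact h1'
            · rintro ⟨h1', h2'⟩; exact ⟨⟨h1', h2'⟩, lt_of_lt_of_le h2' h⟩
          rw [dim_congr1 (d := d) hq]; exact hZ1
      obtain ⟨x, hx⟩ := lemmaD hd' hlt Z hZ1 hallZ
      have hTbd : BddAbove {y : M | d 0 (cutA Z hlt y) = 1} := by
        refine ⟨y₀, fun y hy => ?_⟩
        have hne2 : (cutA Z hlt y).1.Nonempty :=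
          dim_nonempty hd' (by rw [(hy : d 0 (cutA Z hlt y) = 1)]; decide)
        obtain ⟨v, hv⟩ := hne2
        exact le_of_lt (lt_trans hv.2 hv.1.2)
      exact lemmaR hd' hlt hdc hclosed hdisc Z (fun a ha => ha.1) ⟨x, hx⟩ hTbd
  · push_neg at hS
    by_cases hT : ∃ y : M, d 0 (cutA X hlt y) = 1
    · by_cases hTb : BddAbove {y : M | d 0 (cutA X hlt y) = 1}
      · exact lemmaR hd' hlt hdc hclosed hdisc X (fun a ha => ha) hT hTb
      · have hall : ∀ y : M, d 0 (cutA X hlt y) = 1 := by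
          intro y
          rw [not_bddAbove_iff] at hTb
          obtain ⟨z, hz, hyz⟩ := hTb y
          exact cutA_down hd' hlt X hz (le_of_lt hyz)
        obtain ⟨y₀, _⟩ := hne
        set Z : DefSet L M 1 := cutA X hlt y₀ with hZdef
        have hZ1 : d 0 Z = 1 := hall y₀
        have hallZ : ∀ y : M, d 0 (cutA Z hlt y) = 1 := by
          intro y
          rcases le_total y₀ y with h | h
          · have hq : (cutA Z hlt y).1 = (cutA X hlt y).1 := by
              ext v
              constructor
              · rintro ⟨⟨h1', _⟩, h3⟩; exact ⟨h1', h3⟩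
              · rintro ⟨h1', h3⟩; exact ⟨⟨h1', lt_of_le_of_lt h h3⟩, h3⟩
            rw [dim_congr1 (d := d) hq]; exact hall y
          · have hq : (cutA Z hlt y).1 = Z.1 := by
              ext v
              constructor
              · rintro ⟨h1', _⟩; exact h1'
              · rintro ⟨h1', h2'⟩; exact ⟨⟨h1', h2'⟩, lt_of_le_of_lt h h2'⟩
            rw [dim_congr1 (d := d) hq]; exact hZ1
        obtain ⟨x, hx⟩ := lemmaD' hd' hlt Z hZ1 hallZ
        have hTbd : BddBelow {y : M | d 0 (cutB Z hlt y) = 1} := by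
          refine ⟨y₀, fun y hy => ?_⟩
          have hne2 : (cutB Z hlt y).1.Nonempty :=
            dim_nonempty hd' (by rw [(hy : d 0 (cutB Z hlt y) = 1)]; decide)
          obtain ⟨v, hv⟩ := hne2
          exact le_of_lt (lt_trans hv.1.2 hv.2)
        exact lemmaL hd' hlt hdc hclosed hdisc Z (fun a ha => ha.1) ⟨x, hx⟩ hTbd
    · push_neg at hT
      obtain ⟨a0, _⟩ := hne
      have hB : d 0 (cutB X hlt a0) ≤ 0 := wb_le_zero (dim_le_one hd' _) (hS a0)
      have hA : d 0 (cutA X hlt a0) ≤ 0 := wb_le_zero (dim_le_one hd' _) (hT a0)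
      set midD : DefSet L M 1 := cutGE (cutLE X hlt a0) hlt a0 with hmidD
      have hmid : d 0 midD ≤ 0 :=
        dim_subsing hd' hlt fun v hv =>
          show v = fun _ => a0 by rw [fin1_eta v, le_antisymm hv.1.2 hv.2]
      set U1 : DefSet L M 1 :=
        ⟨(cutB X hlt a0).1 ∪ midD.1, (cutB X hlt a0).2.union midD.2⟩ with hU1def
      have hU1 := hd'.2.1 0 (cutB X hlt a0) midD U1 rfl
      have hXeq : X.1 = U1.1 ∪ (cutA X hlt a0).1 := by
        ext v
        constructor
        · intro hv
          rcases lt_trichotomy (v 0) a0 with h | h | h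
          · exact Or.inl (Or.inl ⟨hv, h⟩)
          · exact Or.inl (Or.inr ⟨⟨hv, le_of_eq h⟩, le_of_eq h.symm⟩)
          · exact Or.inr ⟨hv, h⟩
        · rintro ((hv | hv) | hv)
          · exact hv.1
          · exact hv.1.1
          · exact hv.1
      have hXd := hd'.2.1 0 U1 (cutA X hlt a0) X hXeq
      rw [hX1] at hXd
      have hU1le : d 0 U1 ≤ 0 := by rw [hU1]; exact max_le hB hmid
      exact wb_one_nle_zero (le_trans (le_of_eq hXd) (max_le hU1le hA))

end PaperDim
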